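/- Let a : ℕ → ℕ → ℝ be an infinite matrix. The following are equivalent: (1) a ∈ (ℓ∞ : ℓ₁); (2) a ∈ (c : ℓ₁); (3) a ∈ (c₀ : ℓ₁); (4) there exists M ∈ ℝ such that for every finite set K ⊆ ℕ, the series Σ_n |Σ_{k∈K} a(n,k)| converges and its sum is at most M. -/

import Mathlib

open Filter Topology
open scoped ZeroAtInfty

/-- The set of null real sequences. -/
def seqC0 : Set (ℕ → ℝ) := {y | Filter.Tendsto y Filter.atTop (nhds 0)}

/-- The set of convergent real sequences. -/
def seqC : Set (ℕ → ℝ) := {y | ∃ l : ℝ, Filter.Tendsto y Filter.atTop (nhds l)}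

/-- The set of bounded real sequences. -/
def seqLinf : Set (ℕ → ℝ) := {y | ∃ M : ℝ, ∀ n, |y n| ≤ M}

/-- The set of absolutely summable real sequences. -/
def seqL1 : Set (ℕ → ℝ) := {y | Summable fun n => |y n|}

/-- `a ∈ (X : Y)`: for every `x ∈ X` the series `Σ_k a(n,k)·x_k` converges
absolutely for each `n`, and the transformed sequence belongs to `Y`. -/
def MatClass (a : ℕ → ℕ → ℝ) (X Y : Set (ℕ → ℝ)) : Prop :=
  ∀ x ∈ X, (∀ n, Summable fun k => |a n k * x k|) ∧ (fun n => ∑' k, a n k * x k) ∈ Y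

/-! ### Auxiliary lemmas -/

lemma memC0 (f : C₀(ℕ, ℝ)) : (⇑f) ∈ seqC0 := by
  have := f.zero_at_infty'
  rwa [cocompact_eq_cofinite, Nat.cofinite_eq_atTop] at this

noncomputable def finC0 (x : ℕ → ℝ) (K : Finset ℕ) : C₀(ℕ, ℝ) :=
  ⟨⟨fun k => if k ∈ K then x k else 0, continuous_of_discreteTopology⟩, by
    rw [cocompact_eq_cofinite]
    apply tendsto_nhds_of_eventually_eq
    rw [Filter.eventually_cofinite]
    apply Set.Finite.subset K.finite_toSet
    intro k hk
    simp only [Set.mem_setOf_eq] at hk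
    by_contra h
    exact hk (if_neg (fun hh => h (Finset.mem_coe.mpr hh)))⟩

@[simp] lemma finC0_apply (x : ℕ → ℝ) (K : Finset ℕ) (k : ℕ) :
    finC0 x K k = if k ∈ K then x k else 0 := rfl

lemma abs_apply_le_norm (f : C₀(ℕ, ℝ)) (k : ℕ) : |f k| ≤ ‖f‖ := by
  rw [← ZeroAtInftyContinuousMap.norm_toBCF_eq_norm]
  exact (f.toBCF.norm_coe_le_norm k)

lemma finC0_norm_le (x : ℕ → ℝ) (K : Finset ℕ) {C : ℝ} (hC : 0 ≤ C)
    (h : ∀ k, |x k| ≤ C) : ‖finC0 x K‖ ≤ C := by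
  rw [← ZeroAtInftyContinuousMap.norm_toBCF_eq_norm]
  apply BoundedContinuousFunction.norm_le hC |>.mpr
  intro k
  simp only [Real.norm_eq_abs]
  show |finC0 x K k| ≤ C
  rw [finC0_apply]
  split
  · exact h k
  · simpa using hC

lemma abs_eq_sign_mul (t : ℝ) : |t| = (if 0 ≤ t then (1:ℝ) else -1) * t := by
  split_ifs with h
  · rw [one_mul, abs_of_nonneg h]
  · rw [abs_of_neg (lt_of_not_ge h)]; ring

lemma seqC0_subset_seqC : seqC0 ⊆ seqC := fun _ hy => ⟨0, hy⟩

lemma seqC_subset_seqLinf : seqC ⊆ seqLinf := by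
  rintro y ⟨l, hl⟩
  obtain ⟨M, hM⟩ := (hl.abs).bddAbove_range
  exact ⟨M, fun n => hM ⟨n, rfl⟩⟩

lemma summable_mul_of_bounded {f x : ℕ → ℝ} (hf : Summable fun k => |f k|) {C : ℝ}
    (hx : ∀ k, |x k| ≤ C) : Summable fun k => |f k * x k| := by
  apply Summable.of_nonneg_of_le (fun k => abs_nonneg _) (fun k => ?_) (hf.mul_right C)
  rw [abs_mul]; exact mul_le_mul_of_nonneg_left (hx k) (abs_nonneg _)

lemma sum_abs_le_two_mul {g : ℕ → ℝ} {M : ℝ} (K : Finset ℕ)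
    (h : ∀ K' ⊆ K, |∑ k ∈ K', g k| ≤ M) : ∑ k ∈ K, |g k| ≤ 2 * M := by
  classical
  have h1 : ∑ k ∈ K, |g k|
      = ∑ k ∈ K.filter (fun k => 0 ≤ g k), g k
        + ∑ k ∈ K.filter (fun k => ¬ 0 ≤ g k), -(g k) := by
    rw [← Finset.sum_filter_add_sum_filter_not K (fun k => 0 ≤ g k)]
    congr 1
    · exact Finset.sum_congr rfl fun k hk => abs_of_nonneg (Finset.mem_filter.mp hk).2
    · exact Finset.sum_congr rfl fun k hk => abs_of_neg (lt_of_not_ge (Finset.mem_filter.mp hk).2)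
  have h2 : ∑ k ∈ K.filter (fun k => 0 ≤ g k), g k ≤ M :=
    le_trans (le_abs_self _) (h _ (Finset.filter_subset _ _))
  have h3 : ∑ k ∈ K.filter (fun k => ¬ 0 ≤ g k), -(g k) ≤ M := by
    rw [Finset.sum_neg_distrib]
    exact le_trans (neg_le_abs _) (h _ (Finset.filter_subset _ _))
  linarith

/-! ### The rows lemma -/

lemma row_summable {f : ℕ → ℝ} (h : ∀ x ∈ seqC0, Summable fun k => |f k * x k|) :
    Summable fun k => |f k| := by
  by_contra hns
  have habs : ∀ k, 0 ≤ |f k| := fun k => abs_nonneg _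
  set S : ℕ → ℝ := fun n => ∑ i ∈ Finset.range n, |f i| with hSdef
  have hS : Tendsto S atTop atTop :=
    (not_summable_iff_tendsto_nat_atTop_of_nonneg habs).mp hns
  have hSnonneg : ∀ n, 0 ≤ S n := fun n => Finset.sum_nonneg fun i _ => habs i
  have hSmono : Monotone S := fun m n hmn =>
    Finset.sum_le_sum_of_subset_of_nonneg (Finset.range_subset_range.mpr hmn) (fun i _ _ => habs i)
  set x : ℕ → ℝ := fun k => 1 / (1 + S (k + 1)) with hxdef
  have hpos : ∀ n, (0:ℝ) < 1 + S n := fun n => by have := hSnonneg n; linarith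
  have hxmem : x ∈ seqC0 := by
    have h1 : Tendsto (fun k => 1 + S (k + 1)) atTop atTop := by
      apply tendsto_atTop_add_const_left
      exact hS.comp (tendsto_add_atTop_nat 1)
    simpa [hxdef, one_div, seqC0, Pi.inv_def] using h1.inv_tendsto_atTop
  have hsum := h x hxmem
  have key : ∀ m n, m ≤ n → (S n - S m) / (1 + S n) ≤ ∑ k ∈ Finset.Ico m n, |f k * x k| := by
    intro m n hmn
    have h1 : ∀ k ∈ Finset.Ico m n, |f k| * (1 / (1 + S n)) ≤ |f k * x k| := by
      intro k hk
      have hk' : k + 1 ≤ n := (Finset.mem_Ico.mp hk).2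
      have hle : (1:ℝ) + S (k + 1) ≤ 1 + S n := by linarith [hSmono hk']
      have hxk : |x k| = 1 / (1 + S (k + 1)) := abs_of_pos (div_pos one_pos (hpos _))
      rw [abs_mul, hxk]
      exact mul_le_mul_of_nonneg_left (one_div_le_one_div_of_le (hpos (k + 1)) hle) (habs k)
    have hsub : ∑ k ∈ Finset.Ico m n, |f k| = S n - S m := Finset.sum_Ico_eq_sub _ hmn
    calc (S n - S m) / (1 + S n) = ∑ k ∈ Finset.Ico m n, |f k| * (1 / (1 + S n)) := by
          rw [← Finset.sum_mul, hsub, div_eq_mul_one_div]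
      _ ≤ _ := Finset.sum_le_sum h1
  have htail : Tendsto (fun i => ∑' k, |f (k + i) * x (k + i)|) atTop (𝓝 0) :=
    tendsto_sum_nat_add (fun k => |f k * x k|)
  obtain ⟨m, hm⟩ := (htail.eventually (eventually_lt_nhds (by norm_num : (0:ℝ) < 1/2))).exists
  have hm' : ∑' k, |f (k + m) * x (k + m)| < 1/2 := hm
  obtain ⟨n, hn1, hn2⟩ : ∃ n, m ≤ n ∧ 1 + 2 * S m ≤ S n := by
    obtain ⟨n, hn⟩ := ((hS.eventually_ge_atTop (1 + 2 * S m)).and (eventually_ge_atTop m)).exists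
    exact ⟨n, hn.2, hn.1⟩
  have hhalf : (1:ℝ)/2 ≤ (S n - S m) / (1 + S n) := by
    rw [le_div_iff₀ (hpos n)]
    linarith
  have hico : ∑ k ∈ Finset.Ico m n, |f k * x k| ≤ ∑' k, |f (k + m) * x (k + m)| := by
    rw [Finset.sum_Ico_eq_sum_range]
    have hsum' : Summable fun k => |f (k + m) * x (k + m)| := (summable_nat_add_iff m).mpr hsum
    calc ∑ i ∈ Finset.range (n - m), |f (m + i) * x (m + i)|
        = ∑ i ∈ Finset.range (n - m), |f (i + m) * x (i + m)| := by
          apply Finset.sum_congr rfl; intro i _; rw [add_comm]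
      _ ≤ ∑' k, |f (k + m) * x (k + m)| := Summable.sum_le_tsum _ (fun i _ => abs_nonneg _) hsum'
  linarith [key m n hn1]

/-! ### Condition (4) implies `(ℓ∞ : ℓ₁)` -/

lemma rows_of_cond (a : ℕ → ℕ → ℝ) {M : ℝ}
    (hM : ∀ K : Finset ℕ, (Summable fun n => |∑ k ∈ K, a n k|) ∧ (∑' n, |∑ k ∈ K, a n k|) ≤ M)
    (n : ℕ) : Summable (fun k => |a n k|) := by
  have hb : ∀ K : Finset ℕ, |∑ k ∈ K, a n k| ≤ M := fun K =>
    le_trans (Summable.le_tsum (hM K).1 n (fun m _ => abs_nonneg _)) (hM K).2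
  have h2 : ∀ K : Finset ℕ, ∑ k ∈ K, |a n k| ≤ 2 * M := fun K =>
    sum_abs_le_two_mul K (fun K' _ => hb K')
  exact summable_of_sum_range_le (fun k => abs_nonneg _) (fun m => h2 (Finset.range m))

lemma finite_est (a : ℕ → ℕ → ℝ) {M C : ℝ} (hC : 0 ≤ C)
    (hM : ∀ K : Finset ℕ, (Summable fun n => |∑ k ∈ K, a n k|) ∧ (∑' n, |∑ k ∈ K, a n k|) ≤ M)
    {x : ℕ → ℝ} (hx : ∀ k, |x k| ≤ C) (N K : Finset ℕ) :
    ∑ n ∈ N, |∑ k ∈ K, a n k * x k| ≤ C * (2 * M) := by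
  classical
  have hb : ∀ (N' K' : Finset ℕ), ∑ n ∈ N', |∑ k ∈ K', a n k| ≤ M := fun N' K' =>
    le_trans (Summable.sum_le_tsum N' (fun m _ => abs_nonneg _) (hM K').1) (hM K').2
  set ε : ℕ → ℝ := fun n => if 0 ≤ ∑ k ∈ K, a n k * x k then 1 else -1 with hε
  have hε1 : ∀ n, |ε n| ≤ 1 := by
    intro n; rw [hε]; dsimp only; split_ifs <;> norm_num
  set b : ℕ → ℝ := fun k => ∑ n ∈ N, ε n * a n k with hbdef
  have hstep1 : ∑ n ∈ N, |∑ k ∈ K, a n k * x k| = ∑ k ∈ K, b k * x k := by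
    calc ∑ n ∈ N, |∑ k ∈ K, a n k * x k|
        = ∑ n ∈ N, ∑ k ∈ K, ε n * (a n k * x k) := by
          apply Finset.sum_congr rfl
          intro n _
          rw [abs_eq_sign_mul, Finset.mul_sum]
      _ = ∑ k ∈ K, ∑ n ∈ N, ε n * (a n k * x k) := Finset.sum_comm
      _ = ∑ k ∈ K, b k * x k := by
          apply Finset.sum_congr rfl
          intro k _
          rw [hbdef]; dsimp only; rw [Finset.sum_mul]
          exact Finset.sum_congr rfl fun n _ => by ring
  have hstep2 : ∑ k ∈ K, b k * x k ≤ ∑ k ∈ K, |b k| * C := by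
    apply Finset.sum_le_sum
    intro k _
    calc b k * x k ≤ |b k * x k| := le_abs_self _
      _ = |b k| * |x k| := abs_mul _ _
      _ ≤ |b k| * C := mul_le_mul_of_nonneg_left (hx k) (abs_nonneg _)
  have hstep3 : ∑ k ∈ K, |b k| ≤ 2 * M := by
    apply sum_abs_le_two_mul
    intro K' _
    have hbK : ∑ k ∈ K', b k = ∑ n ∈ N, ε n * ∑ k ∈ K', a n k := by
      simp only [hbdef]
      rw [Finset.sum_comm]
      exact Finset.sum_congr rfl fun n _ => (Finset.mul_sum _ _ _).symm
    rw [hbK]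
    calc |∑ n ∈ N, ε n * ∑ k ∈ K', a n k|
        ≤ ∑ n ∈ N, |ε n * ∑ k ∈ K', a n k| := Finset.abs_sum_le_sum_abs _ _
      _ ≤ ∑ n ∈ N, |∑ k ∈ K', a n k| := by
          apply Finset.sum_le_sum; intro n _
          rw [abs_mul]
          calc |ε n| * |∑ k ∈ K', a n k| ≤ 1 * |∑ k ∈ K', a n k| :=
                mul_le_mul_of_nonneg_right (hε1 n) (abs_nonneg _)
            _ = |∑ k ∈ K', a n k| := one_mul _
      _ ≤ M := hb N K'
  calc ∑ n ∈ N, |∑ k ∈ K, a n k * x k| = ∑ k ∈ K, b k * x k := hstep1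
    _ ≤ ∑ k ∈ K, |b k| * C := hstep2
    _ = (∑ k ∈ K, |b k|) * C := by rw [Finset.sum_mul]
    _ ≤ (2 * M) * C := mul_le_mul_of_nonneg_right hstep3 hC
    _ = C * (2 * M) := mul_comm _ _

lemma cond_to_linf (a : ℕ → ℕ → ℝ) {M : ℝ}
    (hM : ∀ K : Finset ℕ, (Summable fun n => |∑ k ∈ K, a n k|) ∧ (∑' n, |∑ k ∈ K, a n k|) ≤ M) :
    MatClass a seqLinf seqL1 := by
  intro x hx
  obtain ⟨C, hC⟩ := hx
  have hC0 : (0:ℝ) ≤ C := le_trans (abs_nonneg _) (hC 0)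
  have hrow : ∀ n, Summable fun k => |a n k| := fun n => rows_of_cond a hM n
  have hsum : ∀ n, Summable fun k => |a n k * x k| := fun n =>
    summable_mul_of_bounded (hrow n) hC
  refine ⟨hsum, ?_⟩
  have hbound : ∀ N : Finset ℕ, ∑ n ∈ N, |∑' k, a n k * x k| ≤ C * (2 * M) := by
    intro N
    have hlim : Tendsto (fun K : Finset ℕ => ∑ n ∈ N, |∑ k ∈ K, a n k * x k|)
        atTop (𝓝 (∑ n ∈ N, |∑' k, a n k * x k|)) := by
      apply tendsto_finset_sum
      intro n _
      exact (continuous_abs.tendsto _).comp ((hsum n).of_abs.hasSum)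
    exact le_of_tendsto' hlim (fun K => finite_est a hC0 hM hC N K)
  exact summable_of_sum_range_le (fun n => abs_nonneg _) (fun m => hbound (Finset.range m))

/-! ### `(c₀ : ℓ₁)` implies condition (4) -/

lemma cond_of_c0 (a : ℕ → ℕ → ℝ) (h : MatClass a seqC0 seqL1) :
    ∃ M : ℝ, ∀ K : Finset ℕ,
      (Summable fun n => |∑ k ∈ K, a n k|) ∧ (∑' n, |∑ k ∈ K, a n k|) ≤ M := by
  classical
  have hrow : ∀ n, Summable fun k => |a n k| := fun n =>
    row_summable (fun x hx => (h x hx).1 n)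
  have hsummul : ∀ (y : C₀(ℕ, ℝ)) (n : ℕ), Summable fun k => a n k * y k := fun y n =>
    ((h _ (memC0 y)).1 n).of_abs
  have hsummulabs : ∀ (y : C₀(ℕ, ℝ)) (n : ℕ), Summable fun k => |a n k * y k| := fun y n =>
    (h _ (memC0 y)).1 n
  -- the family of continuous linear functionals
  have hlin : ∀ (N : Finset ℕ) (ε : {ε : ℕ → ℝ // ∀ n, |ε n| ≤ 1}),
      ∃ g : C₀(ℕ, ℝ) →L[ℝ] ℝ, ∀ y, g y = ∑ n ∈ N, ε.1 n * ∑' k, a n k * y k := by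
    intro N ε
    refine ⟨LinearMap.mkContinuous
      { toFun := fun y => ∑ n ∈ N, ε.1 n * ∑' k, a n k * y k
        map_add' := ?_
        map_smul' := ?_ } (∑ n ∈ N, ∑' k, |a n k|) ?_, fun y => rfl⟩
    · intro y z
      rw [← Finset.sum_add_distrib]
      apply Finset.sum_congr rfl
      intro n _
      have hyz : (fun k => a n k * (y + z) k) = fun k => a n k * y k + a n k * z k := by
        funext k
        have : (y + z) k = y k + z k := rfl
        rw [this]; ring
      rw [hyz, Summable.tsum_add (hsummul y n) (hsummul z n)]
      ring
    · intro c y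
      simp only [RingHom.id_apply, smul_eq_mul]
      rw [Finset.mul_sum]
      apply Finset.sum_congr rfl
      intro n _
      have hcy : (fun k => a n k * (c • y) k) = fun k => c * (a n k * y k) := by
        funext k
        have : (c • y) k = c * y k := rfl
        rw [this]; ring
      rw [hcy, tsum_mul_left]
      ring
    · intro y
      rw [Real.norm_eq_abs]
      calc |∑ n ∈ N, ε.1 n * ∑' k, a n k * y k|
          ≤ ∑ n ∈ N, |ε.1 n * ∑' k, a n k * y k| := Finset.abs_sum_le_sum_abs _ _
        _ ≤ ∑ n ∈ N, (∑' k, |a n k|) * ‖y‖ := by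
            apply Finset.sum_le_sum
            intro n _
            rw [abs_mul]
            calc |ε.1 n| * |∑' k, a n k * y k| ≤ 1 * |∑' k, a n k * y k| :=
                  mul_le_mul_of_nonneg_right (ε.2 n) (abs_nonneg _)
              _ = |∑' k, a n k * y k| := one_mul _
              _ ≤ ∑' k, |a n k * y k| := by
                  have h1 : Summable fun k => ‖a n k * y k‖ := by
                    simpa only [Real.norm_eq_abs] using hsummulabs y n
                  simpa only [Real.norm_eq_abs] using norm_tsum_le_tsum_norm h1
              _ ≤ ∑' k, |a n k| * ‖y‖ := by
                  apply Summable.tsum_le_tsum _ (hsummulabs y n) ((hrow n).mul_right ‖y‖)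
                  intro k
                  rw [abs_mul]
                  exact mul_le_mul_of_nonneg_left (abs_apply_le_norm y k) (abs_nonneg _)
              _ = (∑' k, |a n k|) * ‖y‖ := tsum_mul_right
        _ = (∑ n ∈ N, ∑' k, |a n k|) * ‖y‖ := by rw [Finset.sum_mul]
  choose g hg using hlin
  have hpt : ∀ y : C₀(ℕ, ℝ), ∃ Cy : ℝ, ∀ i : Finset ℕ × {ε : ℕ → ℝ // ∀ n, |ε n| ≤ 1},
      ‖g i.1 i.2 y‖ ≤ Cy := by
    intro y
    have hy2 : Summable fun n => |∑' k, a n k * y k| := (h _ (memC0 y)).2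
    refine ⟨∑' n, |∑' k, a n k * y k|, fun i => ?_⟩
    rw [hg i.1 i.2, Real.norm_eq_abs]
    calc |∑ n ∈ i.1, i.2.1 n * ∑' k, a n k * y k|
        ≤ ∑ n ∈ i.1, |i.2.1 n * ∑' k, a n k * y k| := Finset.abs_sum_le_sum_abs _ _
      _ ≤ ∑ n ∈ i.1, |∑' k, a n k * y k| := by
          apply Finset.sum_le_sum
          intro n _
          rw [abs_mul]
          calc |i.2.1 n| * |∑' k, a n k * y k| ≤ 1 * |∑' k, a n k * y k| :=
                mul_le_mul_of_nonneg_right (i.2.2 n) (abs_nonneg _)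
            _ = _ := one_mul _
      _ ≤ ∑' n, |∑' k, a n k * y k| := Summable.sum_le_tsum _ (fun n _ => abs_nonneg _) hy2
  obtain ⟨C', hC'⟩ := banach_steinhaus (g := fun i : Finset ℕ × {ε : ℕ → ℝ // ∀ n, |ε n| ≤ 1} =>
    g i.1 i.2) hpt
  refine ⟨C', fun K => ?_⟩
  set y : C₀(ℕ, ℝ) := finC0 (fun _ => (1:ℝ)) K with hy
  have htsum : ∀ n, ∑' k, a n k * y k = ∑ k ∈ K, a n k := by
    intro n
    rw [tsum_eq_sum (s := K) (fun k hk => by simp [hy, hk])]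
    exact Finset.sum_congr rfl fun k hk => by simp [hy, hk]
  have hsumK : Summable fun n => |∑ k ∈ K, a n k| := by
    have := (h _ (memC0 y)).2
    exact (show Summable fun n => |∑' k, a n k * y k| from this).congr
      (fun n => by rw [htsum n])
  refine ⟨hsumK, ?_⟩
  apply Summable.tsum_le_of_sum_le hsumK
  intro N
  set ε : ℕ → ℝ := fun n => if 0 ≤ ∑ k ∈ K, a n k then 1 else -1 with hεdef
  have hε : ∀ n, |ε n| ≤ 1 := by
    intro n; rw [hεdef]; dsimp only; split_ifs <;> norm_num
  have hnormy : ‖y‖ ≤ 1 := finC0_norm_le _ _ zero_le_one (fun k => by norm_num)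
  have happ : g N ⟨ε, hε⟩ y = ∑ n ∈ N, |∑ k ∈ K, a n k| := by
    rw [hg N ⟨ε, hε⟩ y]
    apply Finset.sum_congr rfl
    intro n _
    rw [htsum n]
    exact (abs_eq_sign_mul _).symm
  calc ∑ n ∈ N, |∑ k ∈ K, a n k| = g N ⟨ε, hε⟩ y := happ.symm
    _ ≤ |g N ⟨ε, hε⟩ y| := le_abs_self _
    _ = ‖g N ⟨ε, hε⟩ y‖ := (Real.norm_eq_abs _).symm
    _ ≤ ‖g N ⟨ε, hε⟩‖ * ‖y‖ := (g N ⟨ε, hε⟩).le_opNorm y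
    _ ≤ C' * 1 := by
        apply mul_le_mul (hC' (N, ⟨ε, hε⟩)) hnormy (norm_nonneg _)
        exact le_trans (norm_nonneg _) (hC' (N, ⟨ε, hε⟩))
    _ = C' := mul_one _

/-! ### Main theorem -/

theorem matclass_into_l1 (a : ℕ → ℕ → ℝ) :
    (MatClass a seqLinf seqL1 ↔ MatClass a seqC seqL1) ∧
    (MatClass a seqC seqL1 ↔ MatClass a seqC0 seqL1) ∧
    (MatClass a seqC0 seqL1 ↔
      ∃ M : ℝ, ∀ K : Finset ℕ,
        (Summable fun n => |∑ k ∈ K, a n k|) ∧ (∑' n, |∑ k ∈ K, a n k|) ≤ M) := by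
  have mono : ∀ {X Z : Set (ℕ → ℝ)}, Z ⊆ X → MatClass a X seqL1 → MatClass a Z seqL1 :=
    fun hZX hX x hx => hX x (hZX hx)
  have h41 : (∃ M : ℝ, ∀ K : Finset ℕ,
      (Summable fun n => |∑ k ∈ K, a n k|) ∧ (∑' n, |∑ k ∈ K, a n k|) ≤ M) →
      MatClass a seqLinf seqL1 := fun ⟨_, hM⟩ => cond_to_linf a hM
  have h34 := cond_of_c0 a
  refine ⟨⟨fun h1 => mono seqC_subset_seqLinf h1,
      fun h2 => h41 (h34 (mono seqC0_subset_seqC h2))⟩,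
    ⟨fun h2 => mono seqC0_subset_seqC h2,
      fun h3 => mono seqC_subset_seqLinf (h41 (h34 h3))⟩,
    ⟨fun h3 => h34 h3,
      fun h4 => mono (seqC0_subset_seqC.trans seqC_subset_seqLinf) (h41 h4)⟩⟩
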